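/- Let a₁ ≤ a₂ ≤ ⋯ ≤ aₙ < 0 and consider on ℝ^{n+1} = ℝ × ℝⁿ, with coordinates (s, y₁, …, yₙ), the Riemannian metric g = ds² + e^{2a₁s}|dy₁|² + ⋯ + e^{2aₙs}|dyₙ|². Then (ℝ^{n+1}, g) is a Cartan–Hadamard manifold (complete, simply connected, nonpositively curved) whose sectional curvature K is pinched between −(maxᵢ aᵢ²) and −(minᵢ aᵢ²); in particular it has strictly negative sectional curvature. -/

import Mathlib

noncomputable section

open Filter

/-! Generic Riemannian geometry of a metric tensor on `ℝ^d`, given by its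
matrix of coefficients `G p i j = g_p(∂_i, ∂_j)` in the standard coordinates:
partial derivatives, Christoffel symbols, curvature tensor, sectional
curvature, lengths of paths, Riemannian distance, geodesics and parallel
vector fields. -/

/-- partial derivative of `f` in the `k`-th coordinate direction -/
def pder {d : ℕ} (f : (Fin d → ℝ) → ℝ) (k : Fin d) (p : Fin d → ℝ) : ℝ :=
  fderiv ℝ f p (Pi.single k 1)

/-- the value `g_p(X,Y)` of the metric tensor `G` at `p` on two tangent
vectors -/
def gprod {d : ℕ} (G : (Fin d → ℝ) → Matrix (Fin d) (Fin d) ℝ)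
    (p X Y : Fin d → ℝ) : ℝ :=
  ∑ i, ∑ j, G p i j * X i * Y j

/-- Christoffel symbols `Γ^l_{ij}` of the Levi-Civita connection of `G` -/
def christoffel {d : ℕ} (G : (Fin d → ℝ) → Matrix (Fin d) (Fin d) ℝ)
    (p : Fin d → ℝ) (l i j : Fin d) : ℝ :=
  (1 / 2) * ∑ k, (G p)⁻¹ l k *
    (pder (fun q => G q k j) i p + pder (fun q => G q i k) j p -
      pder (fun q => G q i j) k p)

/-- components `R^l_{kij}` of the Riemann curvature tensor of `G`, so that
`R(∂_i,∂_j)∂_k = ∑_l R^l_{kij} ∂_l` -/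
def riemann {d : ℕ} (G : (Fin d → ℝ) → Matrix (Fin d) (Fin d) ℝ)
    (p : Fin d → ℝ) (l k i j : Fin d) : ℝ :=
  pder (fun q => christoffel G q l j k) i p -
    pder (fun q => christoffel G q l i k) j p +
    ∑ m, (christoffel G p l i m * christoffel G p m j k -
      christoffel G p l j m * christoffel G p m i k)

/-- the curvature operator: the vector `R(u,v)w` -/
def curvVec {d : ℕ} (G : (Fin d → ℝ) → Matrix (Fin d) (Fin d) ℝ)
    (p u v w : Fin d → ℝ) : Fin d → ℝ :=
  fun l => ∑ i, ∑ j, ∑ k, u i * v j * w k * riemann G p l k i j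

/-- sectional curvature of `G` at `p` for the plane spanned by `u` and `v`:
`K(u,v) = g(R(u,v)v, u) / (g(u,u)g(v,v) - g(u,v)²)` -/
def sectional {d : ℕ} (G : (Fin d → ℝ) → Matrix (Fin d) (Fin d) ℝ)
    (p u v : Fin d → ℝ) : ℝ :=
  gprod G p (curvVec G p u v v) u /
    (gprod G p u u * gprod G p v v - gprod G p u v ^ 2)

/-- Riemannian length of the path `c : [0,1] → ℝ^d` for the metric `G` -/
def pathLength {d : ℕ} (G : (Fin d → ℝ) → Matrix (Fin d) (Fin d) ℝ)
    (c : ℝ → Fin d → ℝ) : ℝ :=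
  ∫ t in (0:ℝ)..1, Real.sqrt (gprod G (c t) (deriv c t) (deriv c t))

/-- Riemannian distance for the metric `G`: the infimum of the lengths of
`C¹` paths joining the two points -/
def riemDist {d : ℕ} (G : (Fin d → ℝ) → Matrix (Fin d) (Fin d) ℝ)
    (p q : Fin d → ℝ) : ℝ :=
  sInf {L | ∃ c : ℝ → Fin d → ℝ,
    ContDiff ℝ 1 c ∧ c 0 = p ∧ c 1 = q ∧ pathLength G c = L}

/-- `c` is a geodesic of the metric `G`: it satisfies the geodesic equation
`c̈^l + Γ^l_{ij}(c) ċ^i ċ^j = 0` -/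
def IsGeodesic {d : ℕ} (G : (Fin d → ℝ) → Matrix (Fin d) (Fin d) ℝ)
    (c : ℝ → Fin d → ℝ) : Prop :=
  ∀ (t : ℝ) (l : Fin d), deriv (fun u => deriv c u l) t +
    ∑ i, ∑ j, christoffel G (c t) l i j * deriv c t i * deriv c t j = 0

/-- `V` is a `G`-parallel vector field along the path `c`:
`V̇^l + Γ^l_{ij}(c) ċ^i V^j = 0` -/
def IsParallel {d : ℕ} (G : (Fin d → ℝ) → Matrix (Fin d) (Fin d) ℝ)
    (c V : ℝ → Fin d → ℝ) : Prop :=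
  ∀ (t : ℝ) (l : Fin d), deriv (fun u => V u l) t +
    ∑ i, ∑ j, christoffel G (c t) l i j * deriv c t i * V t j = 0

/-- the Heintze metric: the left-invariant metric
`g = ds² + e^{2a₁s}|dy₁|² + ⋯ + e^{2aₙs}|dyₙ|²` of the Heintze group
`G_A = ℝ ⋉_A ℝⁿ`, `A = diag(a₁,…,aₙ)`, on `ℝ^{n+1} = ℝ × ℝⁿ` (coordinate
`0` being `s` and coordinate `i+1` being `yᵢ`) -/
def heintzeG {n : ℕ} (a : Fin n → ℝ) :
    (Fin (n + 1) → ℝ) → Matrix (Fin (n + 1)) (Fin (n + 1)) ℝ :=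
  fun p => Matrix.diagonal (Fin.cases 1 fun j => Real.exp (2 * a j * p 0))
section Heintze

variable {n : ℕ}

/-- extended coefficient vector: `bb a 0 = 0`, `bb a (i+1) = a i` -/
def bb (a : Fin n → ℝ) : Fin (n + 1) → ℝ := Fin.cases 0 a

@[simp] lemma bb_zero (a : Fin n → ℝ) : bb a 0 = 0 := rfl
@[simp] lemma bb_succ (a : Fin n → ℝ) (j : Fin n) : bb a j.succ = a j := by
  simp [bb]

/-- diagonal metric coefficient -/
def ee (a : Fin n → ℝ) (i : Fin (n + 1)) (s : ℝ) : ℝ := Real.exp (2 * bb a i * s)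

lemma ee_pos (a : Fin n → ℝ) (i : Fin (n + 1)) (s : ℝ) : 0 < ee a i s :=
  Real.exp_pos _

lemma heintzeG_apply (a : Fin n → ℝ) (p : Fin (n + 1) → ℝ) (i j : Fin (n + 1)) :
    heintzeG a p i j = if i = j then ee a i (p 0) else 0 := by
  have h : (Fin.cases 1 (fun j => Real.exp (2 * a j * p 0)) : Fin (n+1) → ℝ) =
      fun i => ee a i (p 0) := by
    funext i
    induction i using Fin.cases with
    | zero => simp [ee]
    | succ j => simp [ee]
  rw [heintzeG, h, Matrix.diagonal_apply]

lemma heintzeG_inv (a : Fin n → ℝ) (p : Fin (n + 1) → ℝ) :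
    (heintzeG a p)⁻¹ = Matrix.diagonal fun i => (ee a i (p 0))⁻¹ := by
  apply Matrix.inv_eq_right_inv
  have h : heintzeG a p = Matrix.diagonal fun i => ee a i (p 0) := by
    ext i j; rw [heintzeG_apply, Matrix.diagonal_apply]
  rw [h, Matrix.diagonal_mul_diagonal]
  convert Matrix.diagonal_one
  exact mul_inv_cancel₀ (ee_pos a _ _).ne'

end Heintze
section Pder

variable {d : ℕ}

lemma hasFDerivAt_coord_exp (c : ℝ) (p : Fin (d + 1) → ℝ) :
    HasFDerivAt (fun q : Fin (d + 1) → ℝ => Real.exp (c * q 0))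
      ((c * Real.exp (c * p 0)) • (ContinuousLinearMap.proj 0 :
        (Fin (d + 1) → ℝ) →L[ℝ] ℝ)) p := by
  have h0 : HasFDerivAt (fun q : Fin (d + 1) → ℝ => q 0)
      (ContinuousLinearMap.proj 0 : (Fin (d + 1) → ℝ) →L[ℝ] ℝ) p :=
    (ContinuousLinearMap.proj 0 : (Fin (d + 1) → ℝ) →L[ℝ] ℝ).hasFDerivAt
  have h1 : HasFDerivAt (fun q : Fin (d + 1) → ℝ => c * q 0)
      (c • (ContinuousLinearMap.proj 0 : (Fin (d + 1) → ℝ) →L[ℝ] ℝ)) p := h0.const_mul c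
  have h2 := h1.exp
  have e : (c * Real.exp (c * p 0)) • (ContinuousLinearMap.proj 0 :
      (Fin (d + 1) → ℝ) →L[ℝ] ℝ) = Real.exp (c * p 0) • c • (ContinuousLinearMap.proj 0 :
      (Fin (d + 1) → ℝ) →L[ℝ] ℝ) := by
    rw [smul_smul, mul_comm]
  rw [e]; exact h2

lemma pder_const (x : ℝ) (k : Fin (d + 1)) (p : Fin (d + 1) → ℝ) :
    pder (fun _ => x) k p = 0 := by
  simp [pder]

lemma pder_exp_smul (c e : ℝ) (k : Fin (d + 1)) (p : Fin (d + 1) → ℝ) :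
    pder (fun q => e * Real.exp (c * q 0)) k p =
      if k = 0 then e * c * Real.exp (c * p 0) else 0 := by
  have h := ((hasFDerivAt_coord_exp c p).const_mul e).fderiv
  rw [pder, h]
  simp only [ContinuousLinearMap.smul_apply, ContinuousLinearMap.coe_smul',
    Pi.smul_apply, ContinuousLinearMap.proj_apply, smul_eq_mul]
  rw [Pi.single_apply]
  by_cases hk : k = 0
  · simp [hk]; ring
  · simp [hk, Ne.symm hk]

end Pder
section Christoffel

variable {n : ℕ}

@[simp] lemma ee_zero (a : Fin n → ℝ) (s : ℝ) : ee a 0 s = 1 := by simp [ee]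

lemma pderG (a : Fin n → ℝ) (i j k : Fin (n + 1)) (p : Fin (n + 1) → ℝ) :
    pder (fun q => heintzeG a q i j) k p =
      if i = j ∧ k = 0 then 2 * bb a i * ee a i (p 0) else 0 := by
  by_cases hij : i = j
  · have hfun : (fun q => heintzeG a q i j) =
        fun q : Fin (n + 1) → ℝ => 1 * Real.exp ((2 * bb a i) * q 0) := by
      funext q; rw [heintzeG_apply]; simp [hij, ee]
    rw [hfun, pder_exp_smul]
    by_cases hk : k = 0 <;> simp [hij, hk, ee] <;> ring
  · have hfun : (fun q => heintzeG a q i j) = fun _ : Fin (n + 1) → ℝ => (0:ℝ) := by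
      funext q; rw [heintzeG_apply]; simp [hij]
    rw [hfun, pder_const]
    simp [hij]

/-- closed form of the Christoffel symbols of the Heintze metric -/
def Γc (a : Fin n → ℝ) (p : Fin (n + 1) → ℝ) (l i j : Fin (n + 1)) : ℝ :=
  if l = 0 then (if i = j then -(bb a i * ee a i (p 0)) else 0)
  else (if l = j ∧ i = 0 then bb a l else 0) + (if i = l ∧ j = 0 then bb a l else 0)

lemma christoffel_eq (a : Fin n → ℝ) (p : Fin (n + 1) → ℝ) (l i j : Fin (n + 1)) :
    christoffel (heintzeG a) p l i j = Γc a p l i j := by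
  have hne : ∀ m : Fin (n+1), ee a m (p 0) ≠ 0 := fun m => (ee_pos a m _).ne'
  rw [christoffel, heintzeG_inv]
  simp only [Matrix.diagonal_apply, ite_mul, zero_mul, Finset.sum_ite_eq,
    Finset.mem_univ, if_true, pderG]
  unfold Γc
  by_cases hl : l = 0 <;> by_cases hij : i = j <;> by_cases hi : i = 0 <;>
    by_cases hj : j = 0 <;> by_cases hlj : l = j <;> by_cases hil : i = l <;>
    simp_all <;> field_simp <;> (try ring) <;>
    rw [mul_right_comm, mul_inv_cancel₀ (hne _), one_mul]

end Christoffel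
section Riemann

variable {n : ℕ}

lemma pder_Γc (a : Fin n → ℝ) (p : Fin (n + 1) → ℝ) (l j k i : Fin (n + 1)) :
    pder (fun q => Γc a q l j k) i p =
      if l = 0 ∧ j = k ∧ i = 0 then -(2 * bb a j ^ 2 * ee a j (p 0)) else 0 := by
  by_cases hl : l = 0
  · by_cases hjk : j = k
    · have hfun : (fun q => Γc a q l j k) =
          fun q : Fin (n + 1) → ℝ => (-(bb a j)) * Real.exp ((2 * bb a j) * q 0) := by
        funext q; simp [Γc, hl, hjk, ee]
      rw [hfun, pder_exp_smul]
      by_cases hi : i = 0 <;> simp [hl, hjk, hi, ee] <;> ring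
    · have hfun : (fun q => Γc a q l j k) = fun _ : Fin (n + 1) → ℝ => (0:ℝ) := by
        funext q; simp [Γc, hl, hjk]
      rw [hfun, pder_const]; simp [hjk]
  · have hfun : (fun q => Γc a q l j k) = fun _ : Fin (n + 1) → ℝ =>
        ((if l = k ∧ j = 0 then bb a l else 0) + (if j = l ∧ k = 0 then bb a l else 0)) := by
      funext q; simp [Γc, hl]
    rw [hfun, pder_const]; simp [hl]

lemma sum_Γc0 (a : Fin n → ℝ) (p : Fin (n + 1) → ℝ) (i j k : Fin (n + 1)) :
    ∑ m, Γc a p 0 i m * Γc a p m j k = -(bb a i * ee a i (p 0)) * Γc a p i j k := by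
  have h : ∀ m, Γc a p 0 i m = if i = m then -(bb a i * ee a i (p 0)) else 0 := by
    intro m; simp [Γc]
  simp only [h, ite_mul, zero_mul, Finset.sum_ite_eq, Finset.mem_univ, if_true]

lemma sum_Γc1 (a : Fin n → ℝ) (p : Fin (n + 1) → ℝ) {l : Fin (n + 1)} (hl : l ≠ 0)
    (i j k : Fin (n + 1)) :
    ∑ m, Γc a p l i m * Γc a p m j k =
      (if i = 0 then bb a l * Γc a p l j k else 0) +
        (if i = l then bb a l * Γc a p 0 j k else 0) := by
  have h : ∀ m, Γc a p l i m =
      (if l = m ∧ i = 0 then bb a l else 0) + (if i = l ∧ m = 0 then bb a l else 0) := by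
    intro m; simp [Γc, hl]
  by_cases hi : i = 0 <;> by_cases hil : i = l <;>
    simp_all [h, add_mul, ite_mul, zero_mul, Finset.sum_add_distrib,
      Finset.sum_ite_eq, Finset.sum_ite_eq']

/-- the symmetric coefficient matrix of the curvature -/
def qq (a : Fin n → ℝ) (α β : Fin (n + 1)) : ℝ :=
  if α = 0 then bb a β ^ 2 else if β = 0 then bb a α ^ 2 else bb a α * bb a β

set_option maxHeartbeats 2000000 in
lemma riemann_eq (a : Fin n → ℝ) (p : Fin (n + 1) → ℝ) (l k i j : Fin (n + 1)) :
    riemann (heintzeG a) p l k i j =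
      (if j = l ∧ i = k then qq a l i * ee a i (p 0) else 0)
        - (if i = l ∧ j = k then qq a l j * ee a j (p 0) else 0) := by
  have h1 : (fun q => christoffel (heintzeG a) q l j k) = fun q => Γc a q l j k :=
    funext fun q => christoffel_eq a q l j k
  have h2 : (fun q => christoffel (heintzeG a) q l i k) = fun q => Γc a q l i k :=
    funext fun q => christoffel_eq a q l i k
  rw [riemann, h1, h2, pder_Γc, pder_Γc]
  have h3 : ∑ m, (christoffel (heintzeG a) p l i m * christoffel (heintzeG a) p m j k -
      christoffel (heintzeG a) p l j m * christoffel (heintzeG a) p m i k) =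
      (∑ m, Γc a p l i m * Γc a p m j k) - (∑ m, Γc a p l j m * Γc a p m i k) := by
    rw [Finset.sum_sub_distrib]; simp only [christoffel_eq]
  rw [h3]
  by_cases hl : l = 0
  · subst hl
    rw [sum_Γc0, sum_Γc0]
    by_cases hi : i = 0 <;> by_cases hj : j = 0 <;> by_cases hk : k = 0 <;>
      by_cases hik : i = k <;> by_cases hjk : j = k <;> by_cases hij : j = i <;>
      simp_all [Γc, qq] <;> first | ring1 | (intro h; simp_all)
  · rw [sum_Γc1 a p hl, sum_Γc1 a p hl,
      if_neg (fun h => hl h.1), if_neg (fun h => hl h.1)]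
    by_cases hi : i = 0 <;> by_cases hj : j = 0 <;> by_cases hk : k = 0 <;>
      by_cases hil : i = l <;> by_cases hjl : j = l <;> by_cases hlk : l = k <;>
      by_cases hik : i = k <;> by_cases hjk : j = k <;>
      simp_all [Γc, qq] <;> ring

end Riemann
section Sectional

variable {n : ℕ}

lemma gprod_diag (a : Fin n → ℝ) (p X Y : Fin (n + 1) → ℝ) :
    gprod (heintzeG a) p X Y = ∑ α, ee a α (p 0) * X α * Y α := by
  rw [gprod]
  apply Finset.sum_congr rfl
  intro i _
  have h : ∀ j, heintzeG a p i j * X i * Y j =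
      if j = i then ee a i (p 0) * X i * Y i else 0 := by
    intro j; rw [heintzeG_apply]
    by_cases hij : i = j <;> simp [hij, eq_comm]
  simp [h]

lemma qq_symm (a : Fin n → ℝ) (α β : Fin (n + 1)) : qq a α β = qq a β α := by
  unfold qq
  by_cases h1 : α = 0 <;> by_cases h2 : β = 0 <;> simp_all [mul_comm]

lemma curvVec_eq (a : Fin n → ℝ) (p u v : Fin (n + 1) → ℝ) (l : Fin (n + 1)) :
    curvVec (heintzeG a) p u v v l =
      v l * (∑ β, qq a l β * ee a β (p 0) * (u β * v β))
        - u l * (∑ β, qq a l β * ee a β (p 0) * (v β * v β)) := by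
  rw [curvVec]
  have h : ∀ i j k : Fin (n + 1), u i * v j * v k * riemann (heintzeG a) p l k i j =
      (if k = i then (if j = l then qq a l i * ee a i (p 0) * (u i * v j * v k) else 0) else 0)
      - (if k = j then (if i = l then qq a l j * ee a j (p 0) * (u i * v j * v k) else 0)
          else 0) := by
    intro i j k
    rw [riemann_eq]
    by_cases h1 : j = l <;> by_cases h2 : i = k <;> by_cases h3 : i = l <;>
      by_cases h4 : j = k <;> simp_all [eq_comm] <;> ring
  simp only [h, Finset.sum_sub_distrib, Finset.sum_ite_eq', Finset.mem_univ, if_true,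
    Finset.sum_ite_irrel, Finset.sum_const_zero]
  rw [Finset.mul_sum, Finset.mul_sum]
  congr 1
  · apply Finset.sum_congr rfl; intro i _; ring
  · apply Finset.sum_congr rfl; intro j _; ring

lemma numer_eq (a : Fin n → ℝ) (p u v : Fin (n + 1) → ℝ) :
    gprod (heintzeG a) p (curvVec (heintzeG a) p u v v) u =
      ∑ α, ∑ β, qq a α β * (ee a α (p 0) * ee a β (p 0)) *
        (u α * v α * (u β * v β) - u α ^ 2 * v β ^ 2) := by
  rw [gprod_diag]
  apply Finset.sum_congr rfl
  intro α _
  rw [curvVec_eq, mul_sub, sub_mul]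
  simp only [Finset.mul_sum, Finset.sum_mul]
  rw [← Finset.sum_sub_distrib]
  apply Finset.sum_congr rfl
  intro β _
  ring

lemma denom_eq (a : Fin n → ℝ) (p u v : Fin (n + 1) → ℝ) :
    gprod (heintzeG a) p u u * gprod (heintzeG a) p v v - gprod (heintzeG a) p u v ^ 2 =
      ∑ α, ∑ β, (ee a α (p 0) * ee a β (p 0)) *
        (u α ^ 2 * v β ^ 2 - u α * v α * (u β * v β)) := by
  rw [gprod_diag, gprod_diag, gprod_diag, pow_two, Finset.sum_mul_sum, Finset.sum_mul_sum,
    ← Finset.sum_sub_distrib]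
  apply Finset.sum_congr rfl
  intro α _
  rw [← Finset.sum_sub_distrib]
  apply Finset.sum_congr rfl
  intro β _
  ring

lemma sym_double {d : ℕ} (f : Fin d → Fin d → ℝ) :
    ∑ α, ∑ β, f α β = (1 / 2) * ∑ α, ∑ β, (f α β + f β α) := by
  have h : ∑ α, ∑ β, (f α β + f β α) =
      (∑ α, ∑ β, f α β) + (∑ α, ∑ β, f β α) := by
    rw [← Finset.sum_add_distrib]
    apply Finset.sum_congr rfl
    intro α _
    rw [← Finset.sum_add_distrib]
  rw [h, Finset.sum_comm (f := fun β α => f β α)]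
  ring

end Sectional
section Pinch

variable {n : ℕ}

lemma qq_mem (hn : 0 < n) (a : Fin n → ℝ) (hneg : ∀ i, a i < 0)
    {α β : Fin (n + 1)} (hab : α ≠ β) :
    (Finset.univ.inf' ⟨⟨0, hn⟩, Finset.mem_univ _⟩ fun i => a i ^ 2) ≤ qq a α β ∧
      qq a α β ≤ Finset.univ.sup' ⟨⟨0, hn⟩, Finset.mem_univ _⟩ fun i => a i ^ 2 := by
  induction α using Fin.cases with
  | zero =>
    induction β using Fin.cases with
    | zero => exact absurd rfl hab
    | succ j =>
      constructor
      · simpa [qq] using Finset.inf'_le (fun i => a i ^ 2) (Finset.mem_univ j)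
      · simpa [qq] using Finset.le_sup' (fun i => a i ^ 2) (Finset.mem_univ j)
  | succ i =>
    induction β using Fin.cases with
    | zero =>
      have h1 : (Fin.succ i : Fin (n+1)) ≠ 0 := Fin.succ_ne_zero i
      constructor
      · simpa [qq, h1] using Finset.inf'_le (fun i => a i ^ 2) (Finset.mem_univ i)
      · simpa [qq, h1] using Finset.le_sup' (fun i => a i ^ 2) (Finset.mem_univ i)
    | succ j =>
      have h1 : (Fin.succ i : Fin (n+1)) ≠ 0 := Fin.succ_ne_zero i
      have h2 : (Fin.succ j : Fin (n+1)) ≠ 0 := Fin.succ_ne_zero j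
      have hq : qq a i.succ j.succ = a i * a j := by simp [qq, h1, h2]
      have hi := hneg i
      have hj := hneg j
      have hinf_i := Finset.inf'_le (s := (Finset.univ : Finset (Fin n)))
        (fun i => a i ^ 2) (Finset.mem_univ i)
      have hinf_j := Finset.inf'_le (s := (Finset.univ : Finset (Fin n)))
        (fun i => a i ^ 2) (Finset.mem_univ j)
      have hsup_i := Finset.le_sup' (s := (Finset.univ : Finset (Fin n)))
        (fun i => a i ^ 2) (Finset.mem_univ i)
      have hsup_j := Finset.le_sup' (s := (Finset.univ : Finset (Fin n)))
        (fun i => a i ^ 2) (Finset.mem_univ j)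
      rw [hq]
      rcases le_total (a i) (a j) with hle | hle
      · constructor
        · nlinarith
        · nlinarith
      · constructor
        · nlinarith
        · nlinarith

lemma sectional_pinch (hn : 0 < n) (a : Fin n → ℝ) (hneg : ∀ i, a i < 0)
    (p u v : Fin (n + 1) → ℝ) (h : LinearIndependent ℝ ![u, v]) :
    -(Finset.univ.sup' ⟨⟨0, hn⟩, Finset.mem_univ _⟩ fun i => a i ^ 2) ≤
        sectional (heintzeG a) p u v ∧
      sectional (heintzeG a) p u v ≤
        -(Finset.univ.inf' ⟨⟨0, hn⟩, Finset.mem_univ _⟩ fun i => a i ^ 2) ∧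
      sectional (heintzeG a) p u v < 0 := by
  set m := (Finset.univ.inf' ⟨⟨0, hn⟩, Finset.mem_univ _⟩ fun i => a i ^ 2) with hm
  set M := (Finset.univ.sup' ⟨⟨0, hn⟩, Finset.mem_univ _⟩ fun i => a i ^ 2) with hM
  set N := gprod (heintzeG a) p (curvVec (heintzeG a) p u v v) u with hN
  set D := gprod (heintzeG a) p u u * gprod (heintzeG a) p v v -
    gprod (heintzeG a) p u v ^ 2 with hD
  have hmpos : 0 < m := by
    rw [hm]
    refine (Finset.lt_inf'_iff _).2 ?_
    intro i _
    nlinarith [hneg i]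
  -- combined sum formula
  have hNc : ∀ c : ℝ, N + c * D = (1 / 2) * ∑ α, ∑ β,
      ((c - qq a α β) * (ee a α (p 0) * ee a β (p 0)) *
        (u α * v β - u β * v α) ^ 2) := by
    intro c
    have h1 : N + c * D = ∑ α, ∑ β,
        ((c - qq a α β) * (ee a α (p 0) * ee a β (p 0)) *
          (u α ^ 2 * v β ^ 2 - u α * v α * (u β * v β))) := by
      rw [hN, hD, numer_eq, denom_eq, Finset.mul_sum, ← Finset.sum_add_distrib]
      apply Finset.sum_congr rfl
      intro α _
      rw [Finset.mul_sum, ← Finset.sum_add_distrib]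
      apply Finset.sum_congr rfl
      intro β _
      ring
    rw [h1, sym_double]
    congr 1
    apply Finset.sum_congr rfl
    intro α _
    apply Finset.sum_congr rfl
    intro β _
    rw [qq_symm a β α]
    ring
  have hD2 : D = (1 / 2) * ∑ α, ∑ β,
      ((ee a α (p 0) * ee a β (p 0)) * (u α * v β - u β * v α) ^ 2) := by
    rw [hD, denom_eq, sym_double]
    congr 1
    apply Finset.sum_congr rfl
    intro α _
    apply Finset.sum_congr rfl
    intro β _
    ring
  -- linear independence gives a nonvanishing cross term
  have hex : ∃ α β, u α * v β - u β * v α ≠ 0 := by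
    by_contra hc
    push_neg at hc
    rw [linearIndependent_fin2] at h
    have hv : (![u, v] 1 : Fin (n + 1) → ℝ) ≠ 0 := h.1
    simp only [Matrix.cons_val_one, Matrix.head_cons] at hv
    obtain ⟨β₀, hβ₀⟩ := Function.ne_iff.1 hv
    simp only [Pi.zero_apply] at hβ₀
    apply h.2 (u β₀ / v β₀)
    simp only [Matrix.cons_val_one, Matrix.head_cons, Matrix.cons_val_zero]
    funext α
    have := hc α β₀
    simp only [Pi.smul_apply, smul_eq_mul]
    field_simp [show v β₀ ≠ 0 from hβ₀]
    nlinarith [hc α β₀]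
  obtain ⟨α₀, β₀, hαβ⟩ := hex
  have hDpos : 0 < D := by
    rw [hD2]
    have hterm : ∀ α β : Fin (n + 1),
        0 ≤ (ee a α (p 0) * ee a β (p 0)) * (u α * v β - u β * v α) ^ 2 :=
      fun α β => mul_nonneg
        (mul_nonneg (ee_pos a α _).le (ee_pos a β _).le) (sq_nonneg _)
    have hg : ∀ α : Fin (n + 1), 0 ≤ ∑ β,
        (ee a α (p 0) * ee a β (p 0)) * (u α * v β - u β * v α) ^ 2 :=
      fun α => Finset.sum_nonneg fun β _ => hterm α β
    have h1 : (ee a α₀ (p 0) * ee a β₀ (p 0)) * (u α₀ * v β₀ - u β₀ * v α₀) ^ 2 ≤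
        ∑ β, (ee a α₀ (p 0) * ee a β (p 0)) * (u α₀ * v β - u β * v α₀) ^ 2 :=
      Finset.single_le_sum (fun β _ => hterm α₀ β) (Finset.mem_univ β₀)
    have h2 : (∑ β, (ee a α₀ (p 0) * ee a β (p 0)) * (u α₀ * v β - u β * v α₀) ^ 2) ≤
        ∑ α, ∑ β, (ee a α (p 0) * ee a β (p 0)) * (u α * v β - u β * v α) ^ 2 :=
      Finset.single_le_sum (fun α _ => hg α) (Finset.mem_univ α₀)
    have h0 : 0 < (ee a α₀ (p 0) * ee a β₀ (p 0)) * (u α₀ * v β₀ - u β₀ * v α₀) ^ 2 :=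
      mul_pos (mul_pos (ee_pos a α₀ _) (ee_pos a β₀ _)) (by positivity)
    linarith
  have hub : N + m * D ≤ 0 := by
    rw [hNc m]
    have : ∀ α β : Fin (n + 1),
        (m - qq a α β) * (ee a α (p 0) * ee a β (p 0)) *
          (u α * v β - u β * v α) ^ 2 ≤ 0 := by
      intro α β
      by_cases hab : α = β
      · subst hab
        simp
      · have h1 := (qq_mem hn a hneg hab).1
        rw [← hm] at h1
        have h2 : (0:ℝ) < ee a α (p 0) * ee a β (p 0) :=
          mul_pos (ee_pos a α _) (ee_pos a β _)
        have h3 : (m - qq a α β) * (ee a α (p 0) * ee a β (p 0)) ≤ 0 :=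
          mul_nonpos_iff.2 (Or.inr ⟨by linarith, h2.le⟩)
        exact mul_nonpos_iff.2 (Or.inr ⟨h3, sq_nonneg _⟩)
    have hs : (∑ α, ∑ β, (m - qq a α β) * (ee a α (p 0) * ee a β (p 0)) *
        (u α * v β - u β * v α) ^ 2) ≤ 0 :=
      Finset.sum_nonpos fun α _ => Finset.sum_nonpos fun β _ => this α β
    linarith
  have hlb : 0 ≤ N + M * D := by
    rw [hNc M]
    have : ∀ α β : Fin (n + 1),
        0 ≤ (M - qq a α β) * (ee a α (p 0) * ee a β (p 0)) *
          (u α * v β - u β * v α) ^ 2 := by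
      intro α β
      by_cases hab : α = β
      · subst hab
        simp
      · have h1 := (qq_mem hn a hneg hab).2
        rw [← hM] at h1
        have h2 : (0:ℝ) < ee a α (p 0) * ee a β (p 0) :=
          mul_pos (ee_pos a α _) (ee_pos a β _)
        exact mul_nonneg (mul_nonneg (by linarith) h2.le) (sq_nonneg _)
    have hs : 0 ≤ ∑ α, ∑ β, (M - qq a α β) * (ee a α (p 0) * ee a β (p 0)) *
        (u α * v β - u β * v α) ^ 2 :=
      Finset.sum_nonneg fun α _ => Finset.sum_nonneg fun β _ => this α β
    linarith
  have hsec : sectional (heintzeG a) p u v = N / D := rfl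
  have hK2 : sectional (heintzeG a) p u v ≤ -m := by
    rw [hsec, div_le_iff₀ hDpos]
    linarith
  refine ⟨?_, hK2, ?_⟩
  · rw [hsec, le_div_iff₀ hDpos]
    linarith
  · exact lt_of_le_of_lt hK2 (by linarith)

end Pinch
section Complete

open intervalIntegral MeasureTheory

variable {n : ℕ}

lemma bb_nonpos (a : Fin n → ℝ) (hneg : ∀ i, a i < 0) (α : Fin (n + 1)) : bb a α ≤ 0 := by
  induction α using Fin.cases with
  | zero => simp
  | succ j => simpa using (hneg j).le

lemma ee_antitone (a : Fin n → ℝ) (hneg : ∀ i, a i < 0) (α : Fin (n + 1)) {s t : ℝ}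
    (hst : s ≤ t) : ee a α t ≤ ee a α s := by
  apply Real.exp_le_exp.2
  nlinarith [bb_nonpos a hneg α]

lemma hasDerivAt_coord {c : ℝ → Fin (n + 1) → ℝ} (hc : ContDiff ℝ 1 c) (t : ℝ)
    (α : Fin (n + 1)) : HasDerivAt (fun u => c u α) (deriv c t α) t := by
  have hd : HasDerivAt c (deriv c t) t :=
    ((hc.differentiable one_ne_zero) t).hasDerivAt
  exact (ContinuousLinearMap.proj α :
    (Fin (n + 1) → ℝ) →L[ℝ] ℝ).hasFDerivAt.comp_hasDerivAt t hd

lemma integrand_cont (a : Fin n → ℝ) {c : ℝ → Fin (n + 1) → ℝ} (hc : ContDiff ℝ 1 c) :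
    Continuous fun t => Real.sqrt (gprod (heintzeG a) (c t) (deriv c t) (deriv c t)) := by
  apply Real.continuous_sqrt.comp
  have h : (fun t => gprod (heintzeG a) (c t) (deriv c t) (deriv c t)) =
      fun t => ∑ α, ee a α (c t 0) * deriv c t α * deriv c t α := by
    funext t; rw [gprod_diag]
  rw [h]
  apply continuous_finset_sum
  intro α _
  have h1 : Continuous fun t => c t 0 := (continuous_apply 0).comp hc.continuous
  have h2 : Continuous fun t => deriv c t α :=
    (continuous_apply α).comp (hc.continuous_deriv le_rfl)
  have h3 : Continuous fun t => ee a α (c t 0) :=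
    Real.continuous_exp.comp (continuous_const.mul h1)
  exact (h3.mul h2).mul h2

lemma pathLength_nonneg (a : Fin n → ℝ) (c : ℝ → Fin (n + 1) → ℝ) :
    0 ≤ pathLength (heintzeG a) c :=
  intervalIntegral.integral_nonneg zero_le_one fun _ _ => Real.sqrt_nonneg _

lemma gprod_coord_le (a : Fin n → ℝ) (hneg : ∀ i, a i < 0) (x X : Fin (n + 1) → ℝ)
    {S : ℝ} (hS : x 0 ≤ S) (α : Fin (n + 1)) :
    ee a α S * (X α * X α) ≤ gprod (heintzeG a) x X X := by
  rw [gprod_diag]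
  have h1 : ee a α S * (X α * X α) ≤ ee a α (x 0) * X α * X α := by
    have := ee_antitone a hneg α hS
    nlinarith [mul_self_nonneg (X α)]
  refine h1.trans (Finset.single_le_sum (f := fun β => ee a β (x 0) * X β * X β)
    (fun β _ => ?_) (Finset.mem_univ α))
  have := (ee_pos a β (x 0)).le
  nlinarith [mul_self_nonneg (X β)]

lemma sqrt_le_integrand (a : Fin n → ℝ) (hneg : ∀ i, a i < 0) (x X : Fin (n + 1) → ℝ)
    {S : ℝ} (hS : x 0 ≤ S) (α : Fin (n + 1)) :
    Real.sqrt (ee a α S) * |X α| ≤ Real.sqrt (gprod (heintzeG a) x X X) := by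
  have h := gprod_coord_le a hneg x X hS α
  have h2 : Real.sqrt (ee a α S * (X α * X α)) =
      Real.sqrt (ee a α S) * |X α| := by
    rw [Real.sqrt_mul (ee_pos a α S).le, Real.sqrt_mul_self_eq_abs]
  calc Real.sqrt (ee a α S) * |X α| = Real.sqrt (ee a α S * (X α * X α)) := h2.symm
    _ ≤ _ := Real.sqrt_le_sqrt h

/-- fundamental lower bound for the length of a path in terms of a
coordinate displacement -/
lemma length_lb (a : Fin n → ℝ) {c : ℝ → Fin (n + 1) → ℝ}
    (hc : ContDiff ℝ 1 c) {κ : ℝ} (hκ0 : 0 ≤ κ) (α : Fin (n + 1))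
    (hpt : ∀ τ ∈ Set.Icc (0:ℝ) 1, κ * |deriv c τ α| ≤
      Real.sqrt (gprod (heintzeG a) (c τ) (deriv c τ) (deriv c τ)))
    {t : ℝ} (ht0 : 0 ≤ t) (ht1 : t ≤ 1) :
    κ * |c t α - c 0 α| ≤ pathLength (heintzeG a) c := by
  have hder : Continuous fun τ => deriv c τ α :=
    (continuous_apply α).comp (hc.continuous_deriv le_rfl)
  have hftc : ∫ τ in (0:ℝ)..t, deriv c τ α = c t α - c 0 α :=
    intervalIntegral.integral_eq_sub_of_hasDerivAt
      (fun τ _ => hasDerivAt_coord hc τ α) (hder.intervalIntegrable 0 t)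
  have h1 : κ * |c t α - c 0 α| ≤ ∫ τ in (0:ℝ)..t, κ * |deriv c τ α| := by
    rw [← hftc]
    calc κ * |∫ τ in (0:ℝ)..t, deriv c τ α|
        ≤ κ * ∫ τ in (0:ℝ)..t, |deriv c τ α| := by
          apply mul_le_mul_of_nonneg_left _ hκ0
          exact intervalIntegral.abs_integral_le_integral_abs ht0
      _ = ∫ τ in (0:ℝ)..t, κ * |deriv c τ α| := by
          rw [← intervalIntegral.integral_const_mul]
  have h2 : (∫ τ in (0:ℝ)..t, κ * |deriv c τ α|) ≤
      ∫ τ in (0:ℝ)..t, Real.sqrt (gprod (heintzeG a) (c τ) (deriv c τ) (deriv c τ)) := by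
    apply intervalIntegral.integral_mono_on ht0
      ((continuous_const.mul hder.abs).intervalIntegrable 0 t)
      ((integrand_cont a hc).intervalIntegrable 0 t)
    intro τ hτ
    exact hpt τ ⟨hτ.1, hτ.2.trans ht1⟩
  have h3 : (∫ τ in (0:ℝ)..t, Real.sqrt (gprod (heintzeG a) (c τ) (deriv c τ) (deriv c τ)))
      ≤ pathLength (heintzeG a) c := by
    rw [pathLength]
    apply intervalIntegral.integral_mono_interval le_rfl ht0 ht1
    · filter_upwards with τ using Real.sqrt_nonneg _
    · exact (integrand_cont a hc).intervalIntegrable 0 1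
  linarith

/-- control of the `s`-coordinate along a path -/
lemma s_bound (a : Fin n → ℝ) (hneg : ∀ i, a i < 0) {c : ℝ → Fin (n + 1) → ℝ}
    (hc : ContDiff ℝ 1 c) {t : ℝ} (ht0 : 0 ≤ t) (ht1 : t ≤ 1) :
    |c t 0 - c 0 0| ≤ pathLength (heintzeG a) c := by
  have h := length_lb a hc zero_le_one 0 (fun τ _ => by
    have := sqrt_le_integrand a hneg (c τ) (deriv c τ) (le_refl (c τ 0)) 0
    simpa using this) ht0 ht1
  simpa using h

end Complete
section UpperBound

open intervalIntegral MeasureTheory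

variable {n : ℕ}

lemma straight_contDiff (q r : Fin (n + 1) → ℝ) :
    ContDiff ℝ 1 (fun t : ℝ => q + t • (r - q)) :=
  contDiff_const.add (contDiff_id.smul contDiff_const)

lemma straight_deriv (q r : Fin (n + 1) → ℝ) (t : ℝ) :
    deriv (fun t : ℝ => q + t • (r - q)) t = r - q := by
  have h : HasDerivAt (fun t : ℝ => q + t • (r - q)) ((1:ℝ) • (r - q)) t :=
    ((hasDerivAt_id t).smul_const (r - q)).const_add q
  rw [h.deriv, one_smul]

lemma lengths_nonempty (a : Fin n → ℝ) (q r : Fin (n + 1) → ℝ) :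
    {L | ∃ c : ℝ → Fin (n + 1) → ℝ,
      ContDiff ℝ 1 c ∧ c 0 = q ∧ c 1 = r ∧ pathLength (heintzeG a) c = L}.Nonempty := by
  refine ⟨pathLength (heintzeG a) (fun t : ℝ => q + t • (r - q)),
    (fun t : ℝ => q + t • (r - q)), straight_contDiff q r, by simp, by simp, rfl⟩

lemma lengths_bddBelow (a : Fin n → ℝ) (q r : Fin (n + 1) → ℝ) :
    BddBelow {L | ∃ c : ℝ → Fin (n + 1) → ℝ,
      ContDiff ℝ 1 c ∧ c 0 = q ∧ c 1 = r ∧ pathLength (heintzeG a) c = L} := by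
  refine ⟨0, fun L hL => ?_⟩
  obtain ⟨c, _, _, _, hc⟩ := hL
  exact hc ▸ pathLength_nonneg a c

lemma riemDist_nonneg (a : Fin n → ℝ) (q r : Fin (n + 1) → ℝ) :
    0 ≤ riemDist (heintzeG a) q r :=
  le_csInf (lengths_nonempty a q r) fun L hL => by
    obtain ⟨c, _, _, _, hc⟩ := hL
    exact hc ▸ pathLength_nonneg a c

lemma riemDist_ub (a : Fin n → ℝ) (hneg : ∀ i, a i < 0) (q r : Fin (n + 1) → ℝ) :
    riemDist (heintzeG a) q r ≤
      ∑ α, Real.sqrt (ee a α (min (q 0) (r 0))) * |r α - q α| := by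
  set c : ℝ → Fin (n + 1) → ℝ := fun t => q + t • (r - q) with hcdef
  have hmem : pathLength (heintzeG a) c ∈ {L | ∃ c : ℝ → Fin (n + 1) → ℝ,
      ContDiff ℝ 1 c ∧ c 0 = q ∧ c 1 = r ∧ pathLength (heintzeG a) c = L} :=
    ⟨c, straight_contDiff q r, by simp [hcdef], by simp [hcdef], rfl⟩
  refine (csInf_le (lengths_bddBelow a q r) hmem).trans ?_
  set B := ∑ α, Real.sqrt (ee a α (min (q 0) (r 0))) * |r α - q α| with hB
  have hpt : ∀ t ∈ Set.Icc (0:ℝ) 1,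
      Real.sqrt (gprod (heintzeG a) (c t) (deriv c t) (deriv c t)) ≤ B := by
    intro t ht
    rw [straight_deriv q r t]
    have hct0 : min (q 0) (r 0) ≤ c t 0 := by
      have : c t 0 = q 0 + t * (r 0 - q 0) := by simp [hcdef]
      rcases le_total (q 0) (r 0) with h | h
      · rw [this]; rcases ht with ⟨h0, h1⟩
        have : q 0 ≤ q 0 + t * (r 0 - q 0) := by nlinarith
        simp only [min_eq_left h]; linarith [this]
      · rw [this]; rcases ht with ⟨h0, h1⟩
        have : r 0 ≤ q 0 + t * (r 0 - q 0) := by nlinarith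
        simp only [min_eq_right h]; linarith [this]
    have h1 : gprod (heintzeG a) (c t) (r - q) (r - q) ≤
        ∑ α, ee a α (min (q 0) (r 0)) * ((r - q) α * (r - q) α) := by
      rw [gprod_diag]
      apply Finset.sum_le_sum
      intro α _
      have := ee_antitone a hneg α hct0
      nlinarith [mul_self_nonneg ((r - q) α)]
    have h2 : Real.sqrt (∑ α, ee a α (min (q 0) (r 0)) * ((r - q) α * (r - q) α)) ≤ B := by
      have hsq : (∑ α, ee a α (min (q 0) (r 0)) * ((r - q) α * (r - q) α)) ≤ B ^ 2 := by
        have hle : ∀ α : Fin (n + 1), ee a α (min (q 0) (r 0)) * ((r - q) α * (r - q) α) =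
            (Real.sqrt (ee a α (min (q 0) (r 0))) * |r α - q α|) ^ 2 := by
          intro α
          rw [mul_pow, Real.sq_sqrt (ee_pos a α _).le, sq_abs]
          have : (r - q) α = r α - q α := by simp
          rw [this]; ring
        rw [Finset.sum_congr rfl fun α _ => hle α, hB]
        exact Finset.sum_sq_le_sq_sum_of_nonneg fun α _ =>
          mul_nonneg (Real.sqrt_nonneg _) (abs_nonneg _)
      have hBnn : 0 ≤ B := Finset.sum_nonneg fun α _ =>
        mul_nonneg (Real.sqrt_nonneg _) (abs_nonneg _)
      calc Real.sqrt (∑ α, ee a α (min (q 0) (r 0)) * ((r - q) α * (r - q) α))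
          ≤ Real.sqrt (B ^ 2) := Real.sqrt_le_sqrt hsq
        _ = B := by rw [Real.sqrt_sq hBnn]
    exact (Real.sqrt_le_sqrt h1).trans h2
  calc pathLength (heintzeG a) c
      ≤ ∫ _ in (0:ℝ)..1, B := by
        rw [pathLength]
        apply intervalIntegral.integral_mono_on zero_le_one
          ((integrand_cont a (straight_contDiff q r)).intervalIntegrable 0 1)
          (intervalIntegrable_const) hpt
    _ = B := by simp

end UpperBound
section Completeness

open Filter

variable {n : ℕ}

lemma heintze_complete (a : Fin n → ℝ) (hneg : ∀ i, a i < 0)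
    (u : ℕ → Fin (n + 1) → ℝ)
    (hC : ∀ ε > (0:ℝ), ∃ N, ∀ k ≥ N, ∀ m ≥ N,
      riemDist (heintzeG a) (u k) (u m) < ε) :
    ∃ p, Tendsto (fun k => riemDist (heintzeG a) (u k) p) atTop (nhds 0) := by
  have hpath : ∀ k m (ε : ℝ), riemDist (heintzeG a) (u k) (u m) < ε →
      ∃ c : ℝ → Fin (n + 1) → ℝ, ContDiff ℝ 1 c ∧ c 0 = u k ∧ c 1 = u m ∧
        pathLength (heintzeG a) c < ε := by
    intro k m ε h
    obtain ⟨L, hLmem, hLlt⟩ :=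
      exists_lt_of_csInf_lt (lengths_nonempty a (u k) (u m)) h
    obtain ⟨c, h1, h2, h3, h4⟩ := hLmem
    exact ⟨c, h1, h2, h3, h4 ▸ hLlt⟩
  have hs : CauchySeq fun k => u k 0 := by
    rw [Metric.cauchySeq_iff]
    intro ε hε
    obtain ⟨N, hN⟩ := hC ε hε
    refine ⟨N, fun k hk m hm => ?_⟩
    obtain ⟨c, hc, h0, h1, hlen⟩ := hpath k m ε (hN k hk m hm)
    have hsb := s_bound a hneg hc zero_le_one le_rfl
    rw [h0, h1] at hsb
    rw [Real.dist_eq, abs_sub_comm]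
    exact lt_of_le_of_lt hsb hlen
  obtain ⟨sinf, hsinf⟩ := cauchySeq_tendsto_of_complete hs
  obtain ⟨N₁, hN₁⟩ := Metric.tendsto_atTop.1 hsinf 1 one_pos
  have hub : ∀ k ≥ N₁, u k 0 ≤ sinf + 1 := by
    intro k hk
    have h := hN₁ k hk
    rw [Real.dist_eq] at h
    linarith [(abs_lt.1 h).2]
  set S := sinf + 2 with hSdef
  have hcoord : ∀ α : Fin (n + 1), CauchySeq fun k => u k α := by
    intro α
    rw [Metric.cauchySeq_iff]
    intro ε hε
    set κ := Real.sqrt (ee a α S) with hκ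
    have hκpos : 0 < κ := Real.sqrt_pos.2 (ee_pos a α S)
    set δ := min 1 (κ * ε) with hδ
    have hδpos : 0 < δ := lt_min one_pos (mul_pos hκpos hε)
    obtain ⟨N₂, hN₂⟩ := hC δ hδpos
    refine ⟨max N₁ N₂, fun k hk m hm => ?_⟩
    have hk1 : N₁ ≤ k := le_trans (le_max_left _ _) hk
    have hk2 : N₂ ≤ k := le_trans (le_max_right _ _) hk
    have hm2 : N₂ ≤ m := le_trans (le_max_right _ _) hm
    obtain ⟨c, hc, h0, h1, hlen⟩ := hpath k m δ (hN₂ k hk2 m hm2)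
    have hstay : ∀ τ ∈ Set.Icc (0:ℝ) 1, c τ 0 ≤ S := by
      intro τ hτ
      have hsb := s_bound a hneg hc hτ.1 hτ.2
      have h2 := (abs_lt.1 (lt_of_le_of_lt hsb hlen)).2
      have h3 : c 0 0 = u k 0 := by rw [h0]
      rw [h3] at h2
      have h4 := hub k hk1
      have hδ1 : δ ≤ 1 := min_le_left _ _
      rw [hSdef]
      linarith
    have hpt : ∀ τ ∈ Set.Icc (0:ℝ) 1, κ * |deriv c τ α| ≤
        Real.sqrt (gprod (heintzeG a) (c τ) (deriv c τ) (deriv c τ)) :=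
      fun τ hτ => sqrt_le_integrand a hneg (c τ) (deriv c τ) (hstay τ hτ) α
    have hlb := length_lb a hc hκpos.le α hpt zero_le_one le_rfl
    rw [h0, h1] at hlb
    have hlt : κ * |u m α - u k α| < κ * ε :=
      lt_of_le_of_lt hlb (lt_of_lt_of_le hlen (min_le_right _ _))
    rw [Real.dist_eq, abs_sub_comm]
    exact (mul_lt_mul_iff_right₀ hκpos).1 hlt
  have hlim : ∀ α, ∃ L, Tendsto (fun k => u k α) atTop (nhds L) :=
    fun α => cauchySeq_tendsto_of_complete (hcoord α)
  choose p hp using hlim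
  refine ⟨p, ?_⟩
  have h0le : ∀ k, 0 ≤ riemDist (heintzeG a) (u k) p :=
    fun k => riemDist_nonneg a _ _
  set W : ℕ → ℝ := fun k => ∑ α, Real.sqrt (ee a α (p 0 - 1)) * |p α - u k α| with hW
  have hWlim : Tendsto W atTop (nhds 0) := by
    have hα : ∀ α : Fin (n + 1), Tendsto
        (fun k => Real.sqrt (ee a α (p 0 - 1)) * |p α - u k α|) atTop (nhds 0) := by
      intro α
      have h1 : Tendsto (fun k => p α - u k α) atTop (nhds 0) := by
        have := (tendsto_const_nhds (x := p α) (f := atTop)).sub (hp α)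
        simpa using this
      have h2 : Tendsto (fun k => |p α - u k α|) atTop (nhds 0) := by
        have := h1.abs
        simpa using this
      have h3 := h2.const_mul (Real.sqrt (ee a α (p 0 - 1)))
      simpa using h3
    have := tendsto_finset_sum Finset.univ fun α (_ : α ∈ Finset.univ) => hα α
    simpa using this
  have hevub : ∀ᶠ k in atTop, riemDist (heintzeG a) (u k) p ≤ W k := by
    have hev : ∀ᶠ k in atTop, |u k 0 - p 0| < 1 := by
      obtain ⟨N, hN⟩ := Metric.tendsto_atTop.1 (hp 0) 1 one_pos
      exact eventually_atTop.2 ⟨N, fun k hk => by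
        have := hN k hk; rwa [Real.dist_eq] at this⟩
    filter_upwards [hev] with k hk
    have hmin : p 0 - 1 ≤ min (u k 0) (p 0) := by
      have := (abs_lt.1 hk).1
      exact le_min (by linarith) (by linarith)
    refine (riemDist_ub a hneg (u k) p).trans ?_
    apply Finset.sum_le_sum
    intro α _
    exact mul_le_mul_of_nonneg_right
      (Real.sqrt_le_sqrt (ee_antitone a hneg α hmin)) (abs_nonneg _)
  exact tendsto_of_tendsto_of_tendsto_of_le_of_le' tendsto_const_nhds hWlim
    (Eventually.of_forall h0le) hevub

end Completeness

/-- Let `a₁ ≤ a₂ ≤ ⋯ ≤ aₙ < 0` and consider on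
`ℝ^{n+1} = ℝ × ℝⁿ` the Riemannian metric
`g = ds² + e^{2a₁s}|dy₁|² + ⋯ + e^{2aₙs}|dyₙ|²`.  Then `(ℝ^{n+1}, g)` is a
Cartan–Hadamard manifold — complete, simply connected, (indeed negatively
curved) — whose sectional curvature `K` is pinched between `-(maxᵢ aᵢ²)` and
`-(minᵢ aᵢ²)`; in particular it has strictly negative sectional curvature. -/
theorem statement7 {n : ℕ} (hn : 0 < n) (a : Fin n → ℝ)
    (hmono : Monotone a) (hneg : ∀ i, a i < 0) :
    -- completeness (of the Riemannian distance of `g`)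
    (∀ u : ℕ → Fin (n + 1) → ℝ,
      (∀ ε > (0:ℝ), ∃ N, ∀ k ≥ N, ∀ m ≥ N,
        riemDist (heintzeG a) (u k) (u m) < ε) →
      ∃ p, Tendsto (fun k => riemDist (heintzeG a) (u k) p) atTop (nhds 0)) ∧
    -- simple connectedness
    SimplyConnectedSpace (Fin (n + 1) → ℝ) ∧
    -- curvature pinching `-(maxᵢ aᵢ²) ≤ K ≤ -(minᵢ aᵢ²) < 0`
    (∀ (p u v : Fin (n + 1) → ℝ), LinearIndependent ℝ ![u, v] →
      -(Finset.univ.sup' ⟨⟨0, hn⟩, Finset.mem_univ _⟩ fun i => a i ^ 2) ≤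
          sectional (heintzeG a) p u v ∧
      sectional (heintzeG a) p u v ≤
          -(Finset.univ.inf' ⟨⟨0, hn⟩, Finset.mem_univ _⟩ fun i => a i ^ 2) ∧
      sectional (heintzeG a) p u v < 0) := by
  exact ⟨fun u hC => heintze_complete a hneg u hC, inferInstance,
    fun p u v h => sectional_pinch hn a hneg p u v h⟩
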